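/- arXiv:2305.00482 — 2 statements merged into one kernel-verified Lean document; each statement's English description precedes it below -/
import Mathlib

section
/- Let (H,B₁,B₂) be a Rota-Baxter system of Hopf algebras with cocycle σ, H₁ = Im(σ), and descendent operation ∘. Define T:H₁→H₁ by T(a)=S(B₁(a₁))B₂(a₂). Then (H₁, ∘, 1, Δ|_{H₁}, ε|_{H₁}, T) is a cocommutative Hopf algebra; in particular σ(a₁)∘T(σ(a₂)) = ε(a)1 = T(σ(a₁))∘σ(a₂) for all a∈H. -/
open TensorProduct Coalgebra HopfAlgebra LinearMap

set_option maxHeartbeats 1000000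
set_option synthInstance.maxHeartbeats 400000

variable {F : Type*} [Field F] {H : Type*} [Ring H] [HopfAlgebra F H]

/-- The descendent operation `a ⊗ b ↦ B₁(a₁) b S(B₂(a₂))` as a linear map on `H ⊗ H`. -/
noncomputable def circL (B₁ B₂ : H →ₗ[F] H) : H ⊗[F] H →ₗ[F] H :=
  (LinearMap.mul' F H)
    ∘ₗ (TensorProduct.map ((LinearMap.mul' F H) ∘ₗ TensorProduct.map B₁ LinearMap.id)
        ((antipode (R := F)) ∘ₗ B₂))
    ∘ₗ (TensorProduct.assoc F H H H).symm.toLinearMap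
    ∘ₗ (TensorProduct.map LinearMap.id (TensorProduct.comm F H H).toLinearMap)
    ∘ₗ (TensorProduct.assoc F H H H).toLinearMap
    ∘ₗ (TensorProduct.map Coalgebra.comul LinearMap.id)

/-- The descendent operation `a ∘ b = B₁(a₁) b S(B₂(a₂))`. -/
noncomputable def circ (B₁ B₂ : H →ₗ[F] H) (a b : H) : H := circL B₁ B₂ (a ⊗ₜ[F] b)

/-- The cocycle `σ = B₁ ∗ (S ∘ B₂)`, i.e. `σ(a) = B₁(a₁) S(B₂(a₂))`. -/
noncomputable def cocycleL (B₁ B₂ : H →ₗ[F] H) : H →ₗ[F] H :=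
  (LinearMap.mul' F H) ∘ₗ (TensorProduct.map B₁ ((antipode (R := F)) ∘ₗ B₂)) ∘ₗ Coalgebra.comul

/-- `(H, B₁, B₂)` is a Rota-Baxter system of Hopf algebras: `B₁, B₂` are coalgebra
homomorphisms sending `1` to `1` such that `Bᵢ(a)Bᵢ(b) = Bᵢ(B₁(a₁) b S(B₂(a₂)))`. -/
noncomputable def IsRBSystem (B₁ B₂ : H →ₗ[F] H) : Prop :=
  (Coalgebra.comul ∘ₗ B₁ = TensorProduct.map B₁ B₁ ∘ₗ Coalgebra.comul) ∧
  (Coalgebra.counit ∘ₗ B₁ = Coalgebra.counit (R := F)) ∧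
  (Coalgebra.comul ∘ₗ B₂ = TensorProduct.map B₂ B₂ ∘ₗ Coalgebra.comul) ∧
  (Coalgebra.counit ∘ₗ B₂ = Coalgebra.counit (R := F)) ∧
  B₁ 1 = 1 ∧ B₂ 1 = 1 ∧
  (∀ a b : H, B₁ a * B₁ b = B₁ (circ B₁ B₂ a b)) ∧
  (∀ a b : H, B₂ a * B₂ b = B₂ (circ B₁ B₂ a b))

/-- The map `T(a) = S(B₁(a₁)) B₂(a₂)` as a linear map on `H`. -/
noncomputable def TL (B₁ B₂ : H →ₗ[F] H) : H →ₗ[F] H :=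
  (LinearMap.mul' F H) ∘ₗ (TensorProduct.map ((antipode (R := F)) ∘ₗ B₁) B₂) ∘ₗ Coalgebra.comul

namespace RBAux

lemma comp₂ {R : Type*} [CommSemiring R] {M N P Q O : Type*} [AddCommMonoid M] [AddCommMonoid N]
    [AddCommMonoid P] [AddCommMonoid Q] [AddCommMonoid O] [Module R M] [Module R N] [Module R P]
    [Module R Q] [Module R O] {f : N →ₗ[R] P} {g : M →ₗ[R] N} {f' : Q →ₗ[R] P} {g' : M →ₗ[R] Q}
    (h : f ∘ₗ g = f' ∘ₗ g') (k : O →ₗ[R] M) : f ∘ₗ g ∘ₗ k = f' ∘ₗ g' ∘ₗ k := by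
  rw [← LinearMap.comp_assoc, h, LinearMap.comp_assoc]

variable (F H) in
noncomputable abbrev S : H →ₗ[F] H := antipode (R := F)
variable (F H) in
noncomputable abbrev Δ : H →ₗ[F] H ⊗[F] H := Coalgebra.comul
variable (F H) in
noncomputable abbrev τ : H ⊗[F] H →ₗ[F] H ⊗[F] H := (TensorProduct.comm F H H).toLinearMap
variable (F H) in
noncomputable abbrev ttcL : (H ⊗[F] H) ⊗[F] (H ⊗[F] H) →ₗ[F] (H ⊗[F] H) ⊗[F] (H ⊗[F] H) :=
  (TensorProduct.tensorTensorTensorComm F H H H H).toLinearMap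

variable (F) in
/-- Convolution product. -/
noncomputable def conv {A : Type*} [Semiring A] [Algebra F A] (f g : H →ₗ[F] A) : H →ₗ[F] A :=
  LinearMap.mul' F A ∘ₗ TensorProduct.map f g ∘ₗ Coalgebra.comul

variable (F H) in
/-- Convolution unit. -/
noncomputable def cunit (A : Type*) [Semiring A] [Algebra F A] : H →ₗ[F] A :=
  Algebra.linearMap F A ∘ₗ Coalgebra.counit

section Generic

variable {A : Type*} [Semiring A] [Algebra F A]

lemma mul'_assocL :
    LinearMap.mul' F A ∘ₗ TensorProduct.map (LinearMap.mul' F A) LinearMap.id =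
      (LinearMap.mul' F A ∘ₗ TensorProduct.map LinearMap.id (LinearMap.mul' F A)) ∘ₗ
        (TensorProduct.assoc F A A A).toLinearMap := by
  apply TensorProduct.ext_threefold
  intro x y z
  simp [mul_assoc]

lemma conv_assoc (p q r : H →ₗ[F] A) : conv F (conv F p q) r = conv F p (conv F q r) := by
  have h1 : conv F (conv F p q) r =
      LinearMap.mul' F A ∘ₗ TensorProduct.map (LinearMap.mul' F A) LinearMap.id
        ∘ₗ TensorProduct.map (TensorProduct.map p q) r
        ∘ₗ TensorProduct.map Coalgebra.comul LinearMap.id ∘ₗ Coalgebra.comul := by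
    simp only [conv, ← LinearMap.comp_assoc, ← TensorProduct.map_comp]
    simp [LinearMap.comp_assoc]
  have h2 : conv F p (conv F q r) =
      LinearMap.mul' F A ∘ₗ TensorProduct.map LinearMap.id (LinearMap.mul' F A)
        ∘ₗ TensorProduct.map p (TensorProduct.map q r)
        ∘ₗ TensorProduct.map LinearMap.id Coalgebra.comul ∘ₗ Coalgebra.comul := by
    simp only [conv, ← LinearMap.comp_assoc, ← TensorProduct.map_comp]
    simp [LinearMap.comp_assoc]
  have hco : (TensorProduct.assoc F H H H).toLinearMap ∘ₗ
      TensorProduct.map Coalgebra.comul LinearMap.id ∘ₗ Coalgebra.comul =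
      TensorProduct.map LinearMap.id Coalgebra.comul ∘ₗ Coalgebra.comul := by
    simpa [LinearMap.rTensor, LinearMap.lTensor, LinearMap.comp_assoc] using
      Coalgebra.coassoc (R := F) (A := H)
  have hnat : (TensorProduct.assoc F A A A).toLinearMap ∘ₗ
      TensorProduct.map (TensorProduct.map p q) r =
      TensorProduct.map p (TensorProduct.map q r) ∘ₗ
        (TensorProduct.assoc F H H H).toLinearMap :=
    (TensorProduct.map_map_comp_assoc_eq p q r).symm
  rw [h1, h2]
  simp only [← LinearMap.comp_assoc]
  rw [mul'_assocL]
  simp only [LinearMap.comp_assoc]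
  rw [comp₂ hnat, hco]

lemma conv_unit_right (f : H →ₗ[F] A) : conv F f (cunit F H A) = f := by
  ext a
  set r := Coalgebra.Repr.arbitrary F a with hr
  set s := r.index; set x := r.left; set y := r.right
  have hd : Coalgebra.comul (R := F) a = ∑ i ∈ s, x i ⊗ₜ[F] y i := r.eq.symm
  have h0 : ∑ i ∈ s, (Coalgebra.counit (R := F) (y i)) • x i = a := by
    have h := congrArg (TensorProduct.rid F H) (Coalgebra.sum_tmul_counit_eq (R := F) r)
    rw [map_sum] at h
    simp only [TensorProduct.rid_tmul, one_smul] at h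
    exact h
  calc conv F f (cunit F H A) a
      = ∑ i ∈ s, f (x i) * (Algebra.linearMap F A (Coalgebra.counit (R := F) (y i))) := by
        simp [conv, hd, cunit, map_sum]
    _ = ∑ i ∈ s, (Coalgebra.counit (R := F) (y i)) • f (x i) := by
        simp [Algebra.smul_def, Algebra.commutes, mul_comm]
    _ = f (∑ i ∈ s, (Coalgebra.counit (R := F) (y i)) • x i) := by
        rw [map_sum]; simp [map_smul]
    _ = f a := congrArg f h0

lemma conv_unit_left (f : H →ₗ[F] A) : conv F (cunit F H A) f = f := by
  ext a
  set r := Coalgebra.Repr.arbitrary F a with hr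
  set s := r.index; set x := r.left; set y := r.right
  have hd : Coalgebra.comul (R := F) a = ∑ i ∈ s, x i ⊗ₜ[F] y i := r.eq.symm
  have h0 : ∑ i ∈ s, (Coalgebra.counit (R := F) (x i)) • y i = a := by
    have h := congrArg (TensorProduct.lid F H) (Coalgebra.sum_counit_tmul_eq (R := F) r)
    rw [map_sum] at h
    simp only [TensorProduct.lid_tmul, one_smul] at h
    exact h
  calc conv F (cunit F H A) f a
      = ∑ i ∈ s, (Algebra.linearMap F A (Coalgebra.counit (R := F) (x i))) * f (y i) := by
        simp [conv, hd, cunit, map_sum]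
    _ = ∑ i ∈ s, (Coalgebra.counit (R := F) (x i)) • f (y i) := by
        simp [Algebra.smul_def]
    _ = f (∑ i ∈ s, (Coalgebra.counit (R := F) (x i)) • y i) := by
        rw [map_sum]; simp [map_smul]
    _ = f a := congrArg f h0

lemma conv_unique {g f h : H →ₗ[F] A} (h1 : conv F g f = cunit F H A)
    (h2 : conv F f h = cunit F H A) : g = h := by
  have : conv F g (conv F f h) = conv F (conv F g f) h := (conv_assoc g f h).symm
  rw [h2, h1, conv_unit_right, conv_unit_left] at this
  exact this

/-- Precomposition with a comul-compatible map distributes over convolution. -/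
lemma conv_comp (f g : H →ₗ[F] A) (φ : H →ₗ[F] H)
    (hφ : Coalgebra.comul ∘ₗ φ = TensorProduct.map φ φ ∘ₗ Coalgebra.comul) :
    conv F f g ∘ₗ φ = conv F (f ∘ₗ φ) (g ∘ₗ φ) := by
  simp only [conv, LinearMap.comp_assoc, hφ]
  rw [show TensorProduct.map f g ∘ₗ TensorProduct.map φ φ ∘ₗ Coalgebra.comul (R := F) (A := H)
    = TensorProduct.map (f ∘ₗ φ) (g ∘ₗ φ) ∘ₗ Coalgebra.comul from by
      rw [← LinearMap.comp_assoc, ← TensorProduct.map_comp]]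

end Generic

lemma conv_S_id : conv F (S F H) LinearMap.id = cunit F H H := by
  simpa [conv, cunit, LinearMap.rTensor, LinearMap.comp_assoc] using
    mul_antipode_rTensor_comul (R := F) (A := H)

lemma conv_id_S : conv F LinearMap.id (S F H) = cunit F H H := by
  simpa [conv, cunit, LinearMap.lTensor, LinearMap.comp_assoc] using
    mul_antipode_lTensor_comul (R := F) (A := H)

/-- A coalgebra endomorphism convolved with its antipode-composite is the unit. -/
lemma conv_f_Sf (f : H →ₗ[F] H) (hΔ : Coalgebra.comul ∘ₗ f = TensorProduct.map f f ∘ₗ Coalgebra.comul)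
    (hε : Coalgebra.counit ∘ₗ f = Coalgebra.counit (R := F)) :
    conv F f (S F H ∘ₗ f) = cunit F H H := by
  have : conv F f (S F H ∘ₗ f) = conv F (LinearMap.id ∘ₗ f) (S F H ∘ₗ f) := by simp
  rw [this, ← conv_comp _ _ f hΔ, conv_id_S]
  simp only [cunit, LinearMap.comp_assoc, hε]

lemma conv_Sf_f (f : H →ₗ[F] H) (hΔ : Coalgebra.comul ∘ₗ f = TensorProduct.map f f ∘ₗ Coalgebra.comul)
    (hε : Coalgebra.counit ∘ₗ f = Coalgebra.counit (R := F)) :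
    conv F (S F H ∘ₗ f) f = cunit F H H := by
  have : conv F (S F H ∘ₗ f) f = conv F (S F H ∘ₗ f) (LinearMap.id ∘ₗ f) := by simp
  rw [this, ← conv_comp _ _ f hΔ, conv_S_id]
  simp only [cunit, LinearMap.comp_assoc, hε]

lemma counit_S : Coalgebra.counit ∘ₗ S F H = Coalgebra.counit (R := F) (A := H) := by
  ext a
  set r := Coalgebra.Repr.arbitrary F a with hr
  have h1 : ∑ i ∈ r.index, r.left i * antipode (R := F) (r.right i) =
      algebraMap F H (Coalgebra.counit a) := sum_mul_antipode_eq_algebraMap_counit r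
  have h2 := congrArg (Coalgebra.counit (R := F)) h1
  rw [map_sum] at h2
  simp only [Bialgebra.counit_mul, Bialgebra.counit_algebraMap] at h2
  have h0 : ∑ i ∈ r.index, (Coalgebra.counit (R := F) (r.left i)) • r.right i = a := by
    have h := congrArg (TensorProduct.lid F H) (Coalgebra.sum_counit_tmul_eq (R := F) r)
    rw [map_sum] at h
    simp only [TensorProduct.lid_tmul, one_smul] at h
    exact h
  have h3 : Coalgebra.counit (R := F)
      (antipode (R := F) (A := H) (∑ i ∈ r.index, (Coalgebra.counit (R := F) (r.left i)) • r.right i)) =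
      ∑ i ∈ r.index, Coalgebra.counit (R := F) (r.left i) *
        Coalgebra.counit (R := F) (antipode (R := F) (r.right i)) := by
    rw [map_sum, map_sum]
    simp [smul_eq_mul]
  rw [h0] at h3
  simpa [h3] using h2

-- cocommutativity as a map identity is a hypothesis below
section CC
variable (hccL : τ F H ∘ₗ Δ F H = Δ F H)

lemma coassocL : (TensorProduct.assoc F H H H).toLinearMap ∘ₗ
    TensorProduct.map (Δ F H) LinearMap.id ∘ₗ Δ F H =
    TensorProduct.map LinearMap.id (Δ F H) ∘ₗ Δ F H := by
  simpa [LinearMap.rTensor, LinearMap.lTensor, LinearMap.comp_assoc] using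
    Coalgebra.coassoc (R := F) (A := H)

lemma coassocL' : (TensorProduct.assoc F H H H).symm.toLinearMap ∘ₗ
    TensorProduct.map LinearMap.id (Δ F H) ∘ₗ Δ F H =
    TensorProduct.map (Δ F H) LinearMap.id ∘ₗ Δ F H := by
  ext a
  have h := LinearMap.congr_fun (coassocL (F := F) (H := H)) a
  simp only [LinearMap.comp_apply] at h ⊢
  rw [← h]
  simp

include hccL in
lemma swLC : (TensorProduct.leftComm F H H H).toLinearMap ∘ₗ
    TensorProduct.map LinearMap.id (Δ F H) ∘ₗ Δ F H =
    TensorProduct.map LinearMap.id (Δ F H) ∘ₗ Δ F H := by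
  have hdec : (TensorProduct.leftComm F H H H).toLinearMap =
      (TensorProduct.assoc F H H H).toLinearMap ∘ₗ TensorProduct.map (τ F H) LinearMap.id ∘ₗ
        (TensorProduct.assoc F H H H).symm.toLinearMap := by
    apply TensorProduct.ext'
    intro x u
    induction u using TensorProduct.induction_on with
    | zero => simp
    | tmul y z => simp [TensorProduct.leftComm_tmul]
    | add u v hu hv => simp only [tmul_add, map_add, hu, hv]
  rw [hdec]
  simp only [LinearMap.comp_assoc]
  rw [coassocL']
  rw [comp₂ (by rw [← TensorProduct.map_comp, hccL]; simp :
    TensorProduct.map (τ F H) LinearMap.id ∘ₗ TensorProduct.map (Δ F H) LinearMap.id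
      = TensorProduct.map (Δ F H) LinearMap.id ∘ₗ LinearMap.id) (Δ F H)]
  simp only [LinearMap.id_comp]
  exact coassocL

variable (F H) in
noncomputable abbrev Phi : H ⊗[F] (H ⊗[F] (H ⊗[F] H)) →ₗ[F] (H ⊗[F] H) ⊗[F] (H ⊗[F] H) :=
  (TensorProduct.assoc F H H (H ⊗[F] H)).symm.toLinearMap

variable (F H) in
noncomputable abbrev D4 : H →ₗ[F] H ⊗[F] (H ⊗[F] (H ⊗[F] H)) :=
  TensorProduct.map LinearMap.id
    (TensorProduct.map LinearMap.id (Δ F H) ∘ₗ Δ F H) ∘ₗ Δ F H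

include hccL in
lemma SW : TensorProduct.map LinearMap.id (TensorProduct.leftComm F H H H).toLinearMap ∘ₗ
    D4 F H = D4 F H := by
  simp only [D4, ← LinearMap.comp_assoc]
  congr 1
  rw [← TensorProduct.map_comp, swLC hccL]
  simp

lemma claim1 : TensorProduct.map (Δ F H) (Δ F H) ∘ₗ Δ F H = Phi F H ∘ₗ D4 F H := by
  have step1 : TensorProduct.map (Δ F H) (Δ F H) =
      TensorProduct.map LinearMap.id (Δ F H) ∘ₗ TensorProduct.map (Δ F H) LinearMap.id := by
    rw [← TensorProduct.map_comp]; simp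
  have step2 : D4 F H = TensorProduct.map LinearMap.id (TensorProduct.map LinearMap.id (Δ F H))
      ∘ₗ TensorProduct.map LinearMap.id (Δ F H) ∘ₗ Δ F H := by
    simp only [D4]
    rw [← LinearMap.comp_assoc, ← TensorProduct.map_comp]
    simp
  have N1 : Phi F H ∘ₗ TensorProduct.map LinearMap.id (TensorProduct.map LinearMap.id (Δ F H)) =
      TensorProduct.map LinearMap.id (Δ F H) ∘ₗ (TensorProduct.assoc F H H H).symm.toLinearMap := by
    have := TensorProduct.map_map_comp_assoc_symm_eq (R := F)
      (LinearMap.id (M := H)) (LinearMap.id (M := H)) (Δ F H)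
    simp only [TensorProduct.map_id] at this
    exact this.symm
  rw [step1, step2, LinearMap.comp_assoc, ← LinearMap.comp_assoc (TensorProduct.map LinearMap.id (Δ F H) ∘ₗ Δ F H), N1]
  simp only [LinearMap.comp_assoc]
  rw [coassocL']

lemma claim2 : ttcL F H = Phi F H ∘ₗ
    TensorProduct.map LinearMap.id (TensorProduct.leftComm F H H H).toLinearMap ∘ₗ
    (TensorProduct.assoc F H H (H ⊗[F] H)).toLinearMap := by
  apply TensorProduct.ext_fourfold'
  intro x y z w
  simp [TensorProduct.leftComm_tmul]

include hccL in
lemma swap_mid : ttcL F H ∘ₗ TensorProduct.map (Δ F H) (Δ F H) ∘ₗ Δ F H =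
    TensorProduct.map (Δ F H) (Δ F H) ∘ₗ Δ F H := by
  have hcancel : (TensorProduct.assoc F H H (H ⊗[F] H)).toLinearMap ∘ₗ Phi F H =
      LinearMap.id ∘ₗ LinearMap.id := by ext x; simp
  rw [claim1, claim2]
  simp only [LinearMap.comp_assoc]
  rw [comp₂ hcancel (D4 F H)]
  simp only [LinearMap.id_comp]
  rw [SW hccL]

end CC

lemma ttc_nat (f f' g g' : H →ₗ[F] H) :
    ttcL F H ∘ₗ TensorProduct.map (TensorProduct.map f f') (TensorProduct.map g g') =
    TensorProduct.map (TensorProduct.map f g) (TensorProduct.map f' g') ∘ₗ ttcL F H := by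
  apply TensorProduct.ext_fourfold'
  intro x y z w
  simp

lemma mul2 : LinearMap.mul' F (H ⊗[F] H) =
    TensorProduct.map (LinearMap.mul' F H) (LinearMap.mul' F H) ∘ₗ ttcL F H := by
  apply TensorProduct.ext_fourfold'
  intro x y z w
  simp [LinearMap.mul'_apply, Algebra.TensorProduct.tmul_mul_tmul]

lemma comul_mul'L : Δ F H ∘ₗ LinearMap.mul' F H =
    LinearMap.mul' F (H ⊗[F] H) ∘ₗ TensorProduct.map (Δ F H) (Δ F H) := by
  apply TensorProduct.ext'
  intro x y
  simp [LinearMap.mul'_apply, Bialgebra.comul_mul]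

lemma comul_conv (f g : H →ₗ[F] H) :
    Δ F H ∘ₗ conv F f g = conv F (Δ F H ∘ₗ f) (Δ F H ∘ₗ g) := by
  simp only [conv, ← LinearMap.comp_assoc]
  congr 1
  rw [comul_mul'L, LinearMap.comp_assoc, ← TensorProduct.map_comp]

lemma cunit2 : TensorProduct.map (cunit F H H) (cunit F H H) ∘ₗ Δ F H =
    cunit F H (H ⊗[F] H) := by
  ext a
  set r := Coalgebra.Repr.arbitrary F a with hr
  have hd : Coalgebra.comul (R := F) a = ∑ i ∈ r.index, r.left i ⊗ₜ[F] r.right i := r.eq.symm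
  have h0 : ∑ i ∈ r.index, (Coalgebra.counit (R := F) (r.left i)) • r.right i = a := by
    have h := congrArg (TensorProduct.lid F H) (Coalgebra.sum_counit_tmul_eq (R := F) r)
    rw [map_sum] at h
    simp only [TensorProduct.lid_tmul, one_smul] at h
    exact h
  have h1 : ∑ i ∈ r.index, Coalgebra.counit (R := F) (r.left i) *
      Coalgebra.counit (R := F) (r.right i) = Coalgebra.counit (R := F) a := by
    have := congrArg (Coalgebra.counit (R := F)) h0
    rw [map_sum] at this
    simpa [smul_eq_mul] using this
  calc (TensorProduct.map (cunit F H H) (cunit F H H) ∘ₗ Δ F H) a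
      = ∑ i ∈ r.index, (Coalgebra.counit (R := F) (r.left i) *
          Coalgebra.counit (R := F) (r.right i)) • ((1 : H) ⊗ₜ[F] (1 : H)) := by
        simp only [LinearMap.comp_apply, Δ, hd, map_sum]
        refine Finset.sum_congr rfl fun i _ => ?_
        simp [cunit, Algebra.algebraMap_eq_smul_one, TensorProduct.smul_tmul', smul_smul,
          mul_comm]
    _ = cunit F H (H ⊗[F] H) a := by
        rw [← Finset.sum_smul, h1]
        simp [cunit, Algebra.TensorProduct.one_def, Algebra.algebraMap_eq_smul_one]

lemma comul_cunit : Δ F H ∘ₗ cunit F H H = cunit F H (H ⊗[F] H) := by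
  simp only [cunit, ← LinearMap.comp_assoc]
  congr 1
  ext
  simp [Algebra.TensorProduct.one_def]

lemma conv_map (f f' g g' : H →ₗ[F] H) (hccL : τ F H ∘ₗ Δ F H = Δ F H) :
    TensorProduct.map (conv F f g) (conv F f' g') ∘ₗ Δ F H =
    conv F (TensorProduct.map f f' ∘ₗ Δ F H) (TensorProduct.map g g' ∘ₗ Δ F H) := by
  have lhs1 : TensorProduct.map (conv F f g) (conv F f' g') ∘ₗ Δ F H =
      TensorProduct.map (LinearMap.mul' F H) (LinearMap.mul' F H) ∘ₗ
      TensorProduct.map (TensorProduct.map f g) (TensorProduct.map f' g') ∘ₗ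
      TensorProduct.map (Δ F H) (Δ F H) ∘ₗ Δ F H := by
    simp only [conv, ← LinearMap.comp_assoc, ← TensorProduct.map_comp]
  have rhs1 : conv F (TensorProduct.map f f' ∘ₗ Δ F H) (TensorProduct.map g g' ∘ₗ Δ F H) =
      TensorProduct.map (LinearMap.mul' F H) (LinearMap.mul' F H) ∘ₗ ttcL F H ∘ₗ
      TensorProduct.map (TensorProduct.map f f') (TensorProduct.map g g') ∘ₗ
      TensorProduct.map (Δ F H) (Δ F H) ∘ₗ Δ F H := by
    simp only [conv, mul2, ← LinearMap.comp_assoc, ← TensorProduct.map_comp]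
  rw [lhs1, rhs1]
  rw [comp₂ (ttc_nat f f' g g') (TensorProduct.map (Δ F H) (Δ F H) ∘ₗ Δ F H)]
  congr 1
  congr 1
  exact (swap_mid hccL).symm

section CC2
variable (hccL : τ F H ∘ₗ Δ F H = Δ F H)

include hccL in
lemma antipode_comul : Δ F H ∘ₗ S F H = TensorProduct.map (S F H) (S F H) ∘ₗ Δ F H := by
  refine (conv_unique (f := Δ F H) ?_ ?_).symm
  · -- conv (map S S ∘ Δ) Δ = cunit
    have e1 := conv_map (F := F) (H := H) (S F H) (S F H) LinearMap.id LinearMap.id hccL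
    simp only [TensorProduct.map_id, LinearMap.id_comp] at e1
    rw [← e1, conv_S_id, cunit2]
  · -- conv Δ (Δ ∘ S) = cunit
    have : conv F (Δ F H) (Δ F H ∘ₗ S F H) =
        conv F (Δ F H ∘ₗ LinearMap.id) (Δ F H ∘ₗ S F H) := by simp
    rw [this, ← comul_conv, conv_id_S, comul_cunit]

include hccL in
lemma antipode_antipode : S F H ∘ₗ S F H = LinearMap.id := by
  refine conv_unique (f := S F H) ?_ conv_S_id
  exact conv_Sf_f (S F H) (antipode_comul hccL) counit_S

end CC2

section RB

variable (B₁ B₂ : H →ₗ[F] H)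

lemma cocycleL_eq : cocycleL B₁ B₂ = conv F B₁ (S F H ∘ₗ B₂) := rfl

lemma TL_eq : TL B₁ B₂ = conv F (S F H ∘ₗ B₁) B₂ := rfl

lemma conv_convL {A : Type*} [Semiring A] [Algebra F A] (p q r : H →ₗ[F] A) :
    conv F (conv F p q) r = LinearMap.mul' F A ∘ₗ
      TensorProduct.map (LinearMap.mul' F A ∘ₗ TensorProduct.map p q) r ∘ₗ
      TensorProduct.map (Δ F H) LinearMap.id ∘ₗ Δ F H := by
  simp only [conv]
  congr 1
  rw [← LinearMap.comp_assoc (Δ F H) (TensorProduct.map (Δ F H) LinearMap.id),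
    ← TensorProduct.map_comp, LinearMap.comp_id]
  simp only [LinearMap.comp_assoc]

/-- The key reduction: `circL ∘ (f ⊗ g) ∘ Δ` as an iterated convolution, for `f`
compatible with comultiplication. -/
lemma circL_map (f g : H →ₗ[F] H)
    (hf : Coalgebra.comul ∘ₗ f = TensorProduct.map f f ∘ₗ Coalgebra.comul)
    (hccL : τ F H ∘ₗ Δ F H = Δ F H) :
    circL B₁ B₂ ∘ₗ TensorProduct.map f g ∘ₗ Δ F H =
      conv F (conv F (B₁ ∘ₗ f) g) ((S F H ∘ₗ B₂) ∘ₗ f) := by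
  have e1 : TensorProduct.map (Coalgebra.comul (R := F) (A := H)) LinearMap.id ∘ₗ
      TensorProduct.map f g =
      TensorProduct.map (TensorProduct.map f f) g ∘ₗ TensorProduct.map Coalgebra.comul
        LinearMap.id := by
    rw [← TensorProduct.map_comp, hf,
      show (LinearMap.id ∘ₗ g : H →ₗ[F] H) = g ∘ₗ LinearMap.id by simp,
      TensorProduct.map_comp]
  have e2 : (TensorProduct.assoc F H H H).toLinearMap ∘ₗ
      TensorProduct.map (TensorProduct.map f f) g =
      TensorProduct.map f (TensorProduct.map f g) ∘ₗ
        (TensorProduct.assoc F H H H).toLinearMap :=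
    (TensorProduct.map_map_comp_assoc_eq f f g).symm
  have e3 : TensorProduct.map LinearMap.id (TensorProduct.comm F H H).toLinearMap ∘ₗ
      TensorProduct.map f (TensorProduct.map f g) =
      TensorProduct.map f (TensorProduct.map g f) ∘ₗ
        TensorProduct.map LinearMap.id (TensorProduct.comm F H H).toLinearMap := by
    rw [← TensorProduct.map_comp, ← TensorProduct.map_comp, LinearMap.id_comp,
      LinearMap.comp_id, ← TensorProduct.map_comp_comm_eq g f]
  have e4 : (TensorProduct.assoc F H H H).symm.toLinearMap ∘ₗ
      TensorProduct.map f (TensorProduct.map g f) =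
      TensorProduct.map (TensorProduct.map f g) f ∘ₗ
        (TensorProduct.assoc F H H H).symm.toLinearMap :=
    (TensorProduct.map_map_comp_assoc_symm_eq f g f).symm
  have e5a : (LinearMap.mul' F H ∘ₗ TensorProduct.map B₁ LinearMap.id) ∘ₗ
      TensorProduct.map f g = LinearMap.mul' F H ∘ₗ TensorProduct.map (B₁ ∘ₗ f) g := by
    rw [LinearMap.comp_assoc, ← TensorProduct.map_comp, LinearMap.id_comp]
  have e5 : TensorProduct.map (LinearMap.mul' F H ∘ₗ TensorProduct.map B₁ LinearMap.id)
      ((antipode (R := F)) ∘ₗ B₂) ∘ₗ TensorProduct.map (TensorProduct.map f g) f =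
      TensorProduct.map (LinearMap.mul' F H ∘ₗ TensorProduct.map (B₁ ∘ₗ f) g)
        ((S F H ∘ₗ B₂) ∘ₗ f) ∘ₗ LinearMap.id := by
    rw [← TensorProduct.map_comp, e5a, LinearMap.comp_id, LinearMap.comp_assoc]
  have eτ : TensorProduct.map (LinearMap.id : H →ₗ[F] H)
        (TensorProduct.comm F H H).toLinearMap ∘ₗ
      TensorProduct.map (LinearMap.id : H →ₗ[F] H) (Δ F H) =
      TensorProduct.map (LinearMap.id : H →ₗ[F] H) (Δ F H) ∘ₗ LinearMap.id := by
    rw [← TensorProduct.map_comp, hccL]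
    simp
  rw [conv_convL, circL]
  simp only [LinearMap.comp_assoc]
  rw [comp₂ e1 (Δ F H),
    comp₂ e2 (TensorProduct.map Coalgebra.comul LinearMap.id ∘ₗ Δ F H),
    coassocL,
    comp₂ e3 (TensorProduct.map LinearMap.id (Δ F H) ∘ₗ Δ F H),
    comp₂ eτ (Δ F H)]
  simp only [LinearMap.id_comp]
  rw [comp₂ e4 (TensorProduct.map LinearMap.id (Δ F H) ∘ₗ Δ F H),
    coassocL',
    comp₂ e5 (TensorProduct.map (Δ F H) LinearMap.id ∘ₗ Δ F H)]
  simp only [LinearMap.id_comp, LinearMap.comp_assoc]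

lemma circ_one (a : H) : circ B₁ B₂ a 1 = cocycleL B₁ B₂ a := by
  set r := Coalgebra.Repr.arbitrary F a with hr
  have hd : Coalgebra.comul (R := F) a = ∑ i ∈ r.index, r.left i ⊗ₜ[F] r.right i := r.eq.symm
  simp only [circ, circL, cocycleL, LinearMap.comp_apply, LinearEquiv.coe_coe,
    TensorProduct.map_tmul, LinearMap.id_coe, id_eq, hd]
  simp [TensorProduct.sum_tmul, map_sum, LinearMap.mul'_apply]

end RB
end RBAux

open RBAux in
/-- `T(a) = S(B₁(a₁))B₂(a₂)` is an antipode for the descendent bialgebra structure on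
`H₁ = Im(σ)`, making it a cocommutative Hopf algebra: `T` preserves `H₁` and
`σ(a₁) ∘ T(σ(a₂)) = ε(a)1 = T(σ(a₁)) ∘ σ(a₂)`. -/
theorem descendent_hopf
    (hcc : ∀ a : H, (TensorProduct.comm F H H) (Coalgebra.comul a) = Coalgebra.comul a)
    (B₁ B₂ : H →ₗ[F] H) (hRB : IsRBSystem B₁ B₂) :
    (∀ x ∈ LinearMap.range (cocycleL B₁ B₂),
      TL B₁ B₂ x ∈ LinearMap.range (cocycleL B₁ B₂)) ∧
    (∀ a : H, circL B₁ B₂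
        (TensorProduct.map (cocycleL B₁ B₂) (TL B₁ B₂ ∘ₗ cocycleL B₁ B₂)
          (Coalgebra.comul a)) =
      algebraMap F H (Coalgebra.counit (R := F) a)) ∧
    (∀ a : H, circL B₁ B₂
        (TensorProduct.map (TL B₁ B₂ ∘ₗ cocycleL B₁ B₂) (cocycleL B₁ B₂)
          (Coalgebra.comul a)) =
      algebraMap F H (Coalgebra.counit (R := F) a)) := by
  simp only [IsRBSystem] at hRB
  obtain ⟨h1Δ, h1ε, h2Δ, h2ε, hB11, hB21, hrb1, hrb2⟩ := hRB
  have hccL : τ F H ∘ₗ Δ F H = Δ F H := LinearMap.ext hcc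
  set σL := cocycleL B₁ B₂ with hσL
  have hσ : σL = conv F B₁ (S F H ∘ₗ B₂) := rfl
  have hT : TL B₁ B₂ = conv F (S F H ∘ₗ B₁) B₂ := rfl
  have hσ1 : B₁ ∘ₗ σL = B₁ := by
    ext a
    simp only [LinearMap.comp_apply, hσL]
    rw [← circ_one, ← hrb1 a 1, hB11, mul_one]
  have hσ2 : B₂ ∘ₗ σL = B₂ := by
    ext a
    simp only [LinearMap.comp_apply, hσL]
    rw [← circ_one, ← hrb2 a 1, hB21, mul_one]
  have hSB₂Δ : Coalgebra.comul ∘ₗ (S F H ∘ₗ B₂) =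
      TensorProduct.map (S F H ∘ₗ B₂) (S F H ∘ₗ B₂) ∘ₗ Coalgebra.comul := by
    rw [← LinearMap.comp_assoc, antipode_comul hccL, LinearMap.comp_assoc, h2Δ,
      ← LinearMap.comp_assoc, ← TensorProduct.map_comp]
  have hSB₁Δ : Coalgebra.comul ∘ₗ (S F H ∘ₗ B₁) =
      TensorProduct.map (S F H ∘ₗ B₁) (S F H ∘ₗ B₁) ∘ₗ Coalgebra.comul := by
    rw [← LinearMap.comp_assoc, antipode_comul hccL, LinearMap.comp_assoc, h1Δ,
      ← LinearMap.comp_assoc, ← TensorProduct.map_comp]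
  have hσΔ : Coalgebra.comul ∘ₗ σL = TensorProduct.map σL σL ∘ₗ Coalgebra.comul := by
    rw [hσ, comul_conv, h1Δ, hSB₂Δ]
    exact (conv_map B₁ B₁ (S F H ∘ₗ B₂) (S F H ∘ₗ B₂) hccL).symm
  have hTΔ : Coalgebra.comul ∘ₗ TL B₁ B₂ =
      TensorProduct.map (TL B₁ B₂) (TL B₁ B₂) ∘ₗ Coalgebra.comul := by
    rw [hT, comul_conv, h2Δ, hSB₁Δ]
    exact (conv_map (S F H ∘ₗ B₁) (S F H ∘ₗ B₁) B₂ B₂ hccL).symm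
  have hTσ : TL B₁ B₂ ∘ₗ σL = TL B₁ B₂ := by
    rw [hT, conv_comp _ _ σL hσΔ, LinearMap.comp_assoc, hσ1, hσ2]
  have hAid : circL B₁ B₂ ∘ₗ TensorProduct.map LinearMap.id (TL B₁ B₂) ∘ₗ Coalgebra.comul =
      cunit F H H := by
    rw [circL_map B₁ B₂ LinearMap.id (TL B₁ B₂)
      (by simp [TensorProduct.map_id]) hccL]
    simp only [LinearMap.comp_id]
    rw [show conv F B₁ (TL B₁ B₂) = B₂ from by
      rw [hT, ← conv_assoc, conv_f_Sf B₁ h1Δ h1ε, conv_unit_left]]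
    exact conv_f_Sf B₂ h2Δ h2ε
  have hcirc : ∀ (B : H →ₗ[F] H), (∀ a b : H, B a * B b = B (circ B₁ B₂ a b)) → B 1 = 1 →
      conv F B (B ∘ₗ TL B₁ B₂) = cunit F H H := by
    intro B hrb hB1
    ext a
    set r := Coalgebra.Repr.arbitrary F a with hr
    have hd : Coalgebra.comul (R := F) a = ∑ i ∈ r.index, r.left i ⊗ₜ[F] r.right i := r.eq.symm
    have hstep : conv F B (B ∘ₗ TL B₁ B₂) a =
        B ((circL B₁ B₂ ∘ₗ TensorProduct.map LinearMap.id (TL B₁ B₂) ∘ₗ Coalgebra.comul) a) := by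
      simp only [conv, LinearMap.comp_apply, hd, map_sum, TensorProduct.map_tmul,
        LinearMap.mul'_apply, LinearMap.id_coe, id_eq]
      exact Finset.sum_congr rfl fun i _ => by rw [hrb]; rfl
    rw [hstep, hAid]
    simp [cunit, Algebra.algebraMap_eq_smul_one, map_smul, hB1]
  have hB1T : B₁ ∘ₗ TL B₁ B₂ = S F H ∘ₗ B₁ :=
    (conv_unique (f := B₁) (conv_Sf_f B₁ h1Δ h1ε) (hcirc B₁ hrb1 hB11)).symm
  have hB2T : B₂ ∘ₗ TL B₁ B₂ = S F H ∘ₗ B₂ :=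
    (conv_unique (f := B₂) (conv_Sf_f B₂ h2Δ h2ε) (hcirc B₂ hrb2 hB21)).symm
  have hSS := antipode_antipode (F := F) (H := H) hccL
  have hσT : σL ∘ₗ TL B₁ B₂ = TL B₁ B₂ := by
    rw [hσ, conv_comp _ _ _ hTΔ, hB1T, LinearMap.comp_assoc, hB2T,
      ← LinearMap.comp_assoc, hSS, LinearMap.id_comp, ← hT]
  have hX2 : circL B₁ B₂ ∘ₗ TensorProduct.map σL (TL B₁ B₂ ∘ₗ σL) ∘ₗ Coalgebra.comul =
      cunit F H H := by
    rw [circL_map B₁ B₂ σL (TL B₁ B₂ ∘ₗ σL) hσΔ hccL, hσ1, hTσ,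
      show (S F H ∘ₗ B₂) ∘ₗ σL = S F H ∘ₗ B₂ from by rw [LinearMap.comp_assoc, hσ2],
      show conv F B₁ (TL B₁ B₂) = B₂ from by
        rw [hT, ← conv_assoc, conv_f_Sf B₁ h1Δ h1ε, conv_unit_left]]
    exact conv_f_Sf B₂ h2Δ h2ε
  have hTσΔ : Coalgebra.comul ∘ₗ (TL B₁ B₂ ∘ₗ σL) =
      TensorProduct.map (TL B₁ B₂ ∘ₗ σL) (TL B₁ B₂ ∘ₗ σL) ∘ₗ Coalgebra.comul := by
    rw [← LinearMap.comp_assoc, hTΔ, LinearMap.comp_assoc, hσΔ,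
      ← LinearMap.comp_assoc, ← TensorProduct.map_comp]
  have hX3 : circL B₁ B₂ ∘ₗ TensorProduct.map (TL B₁ B₂ ∘ₗ σL) σL ∘ₗ Coalgebra.comul =
      cunit F H H := by
    rw [circL_map B₁ B₂ (TL B₁ B₂ ∘ₗ σL) σL hTσΔ hccL,
      show B₁ ∘ₗ (TL B₁ B₂ ∘ₗ σL) = S F H ∘ₗ B₁ from by
        rw [← LinearMap.comp_assoc, hB1T, LinearMap.comp_assoc, hσ1],
      show (S F H ∘ₗ B₂) ∘ₗ (TL B₁ B₂ ∘ₗ σL) = B₂ from by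
        rw [← LinearMap.comp_assoc,
          show (S F H ∘ₗ B₂) ∘ₗ TL B₁ B₂ = B₂ from by
            rw [LinearMap.comp_assoc, hB2T, ← LinearMap.comp_assoc, hSS, LinearMap.id_comp],
          hσ2],
      conv_assoc,
      show conv F σL B₂ = B₁ from by
        rw [hσ, conv_assoc, conv_Sf_f B₂ h2Δ h2ε, conv_unit_right]]
    exact conv_Sf_f B₁ h1Δ h1ε
  refine ⟨?_, ?_, ?_⟩
  · rintro x ⟨b, hb⟩
    refine ⟨TL B₁ B₂ b, ?_⟩
    have h1 : σL (TL B₁ B₂ b) = TL B₁ B₂ b := by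
      have := LinearMap.congr_fun hσT b
      simpa using this
    have h2 : TL B₁ B₂ x = TL B₁ B₂ b := by
      rw [← hb]
      have := LinearMap.congr_fun hTσ b
      simpa using this
    rw [h2]
    exact h1
  · intro a
    have := LinearMap.congr_fun hX2 a
    simpa [cunit] using this
  · intro a
    have := LinearMap.congr_fun hX3 a
    simpa [cunit] using this
end

section
/- Let (H,B₁,B₂) be a Rota-Baxter system of Hopf algebras with descendent Hopf algebra H_{B₁,B₂} = (Im(σ), ∘, 1, Δ, ε, T). Then B₁ and B₂ are Hopf algebra homomorphisms from H_{B₁,B₂} to H, and Im(B₁) and Im(B₂) are Hopf subalgebras of H. -/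
open TensorProduct Coalgebra HopfAlgebra LinearMap

variable {F : Type*} [Field F] {H : Type*} [Ring H] [HopfAlgebra F H]

noncomputable def RBconv (f g : H →ₗ[F] H) : H →ₗ[F] H :=
  (LinearMap.mul' F H) ∘ₗ (TensorProduct.map f g) ∘ₗ Coalgebra.comul

noncomputable def RBe : H →ₗ[F] H := (Algebra.linearMap F H) ∘ₗ Coalgebra.counit

lemma RBe_apply (a : H) : RBe (F := F) a = algebraMap F H (Coalgebra.counit a) := rfl

lemma RBconv_repr (f g : H →ₗ[F] H) (a : H) (r : Coalgebra.Repr F a (H × H)) :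
    RBconv f g a = ∑ i ∈ r.index, f (r.left i) * g (r.right i) := by
  simp only [RBconv, LinearMap.comp_apply, ← r.eq, map_sum, TensorProduct.map_tmul,
    LinearMap.mul'_apply]

lemma RBconv_one_left (f : H →ₗ[F] H) : RBconv (RBe (F := F)) f = f := by
  ext a
  obtain r := Coalgebra.Repr.arbitrary F a
  rw [RBconv_repr _ _ _ r]
  have h := Coalgebra.sum_counit_tmul_map_eq (R := F) f a (repr := r)
  have h2 := congrArg (TensorProduct.lid F H) h
  simp only [map_sum, TensorProduct.lid_tmul, one_smul] at h2
  rw [← h2]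
  refine Finset.sum_congr rfl fun i _ => ?_
  rw [RBe_apply, Algebra.algebraMap_eq_smul_one, smul_mul_assoc, one_mul]

lemma RBconv_one_right (f : H →ₗ[F] H) : RBconv f (RBe (F := F)) = f := by
  ext a
  obtain r := Coalgebra.Repr.arbitrary F a
  rw [RBconv_repr _ _ _ r]
  have h := Coalgebra.sum_map_tmul_counit_eq (R := F) f a (repr := r)
  have h2 := congrArg (TensorProduct.rid F H) h
  simp only [map_sum, TensorProduct.rid_tmul, one_smul] at h2
  rw [← h2]
  refine Finset.sum_congr rfl fun i _ => ?_
  rw [RBe_apply, Algebra.algebraMap_eq_smul_one, mul_smul_comm, mul_one]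

lemma RBconv_assoc (f g h : H →ₗ[F] H) :
    RBconv (RBconv f g) h = RBconv f (RBconv g h) := by
  ext a
  set r := Coalgebra.Repr.arbitrary F a
  set rl : ∀ i : r.ι, Coalgebra.Repr F (r.left i) (H × H) := fun i => Coalgebra.Repr.arbitrary F _
  set rr : ∀ i : r.ι, Coalgebra.Repr F (r.right i) (H × H) := fun i => Coalgebra.Repr.arbitrary F _
  have key := Coalgebra.sum_map_tmul_tmul_eq (R := F) f g h a (repr := r) (a₁ := rl) (a₂ := rr)
  have key2 := congrArg ((LinearMap.mul' F H) ∘ₗ (LinearMap.lTensor H (LinearMap.mul' F H))) key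
  simp only [map_sum, LinearMap.comp_apply, LinearMap.lTensor_tmul, LinearMap.mul'_apply] at key2
  rw [RBconv_repr _ _ _ r, RBconv_repr _ _ _ r]
  calc ∑ i ∈ r.index, RBconv f g (r.left i) * h (r.right i)
      = ∑ i ∈ r.index, ∑ j ∈ (rl i).index,
          f ((rl i).left j) * (g ((rl i).right j) * h (r.right i)) := by
        refine Finset.sum_congr rfl fun i _ => ?_
        rw [RBconv_repr _ _ _ (rl i), Finset.sum_mul]
        exact Finset.sum_congr rfl fun j _ => (mul_assoc _ _ _)
    _ = ∑ i ∈ r.index, ∑ j ∈ (rr i).index,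
          f (r.left i) * (g ((rr i).left j) * h ((rr i).right j)) := key2.symm
    _ = ∑ i ∈ r.index, f (r.left i) * RBconv g h (r.right i) := by
        refine Finset.sum_congr rfl fun i _ => ?_
        rw [RBconv_repr _ _ _ (rr i), Finset.mul_sum]

/-- Repr transported along a coalgebra map. -/
noncomputable def RBreprMap (φ : H →ₗ[F] H)
    (hΔ : Coalgebra.comul ∘ₗ φ = TensorProduct.map φ φ ∘ₗ Coalgebra.comul)
    (a : H) (r : Coalgebra.Repr F a (H × H)) : Coalgebra.Repr F (φ a) (H × H) where
  index := r.index
  left := φ ∘ r.left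
  right := φ ∘ r.right
  eq := by
    have := congrArg (TensorProduct.map φ φ) r.eq
    simp only [map_sum, TensorProduct.map_tmul] at this
    have h2 := LinearMap.congr_fun hΔ a
    simp only [LinearMap.comp_apply] at h2
    simpa [h2] using this

lemma RBconv_antipode_right (φ : H →ₗ[F] H)
    (hΔ : Coalgebra.comul ∘ₗ φ = TensorProduct.map φ φ ∘ₗ Coalgebra.comul)
    (hε : Coalgebra.counit ∘ₗ φ = Coalgebra.counit (R := F)) :
    RBconv φ ((antipode (R := F)) ∘ₗ φ) = RBe (F := F) := by
  ext a
  obtain r := Coalgebra.Repr.arbitrary F a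
  rw [RBconv_repr _ _ _ r]
  have h := HopfAlgebra.sum_mul_antipode_eq_algebraMap_counit (R := F) (RBreprMap φ hΔ a r)
  have hε' := LinearMap.congr_fun hε a
  simp only [LinearMap.comp_apply] at hε' h
  simpa [RBreprMap, RBe_apply, hε'] using h

lemma RBconv_antipode_left (φ : H →ₗ[F] H)
    (hΔ : Coalgebra.comul ∘ₗ φ = TensorProduct.map φ φ ∘ₗ Coalgebra.comul)
    (hε : Coalgebra.counit ∘ₗ φ = Coalgebra.counit (R := F)) :
    RBconv ((antipode (R := F)) ∘ₗ φ) φ = RBe (F := F) := by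
  ext a
  obtain r := Coalgebra.Repr.arbitrary F a
  rw [RBconv_repr _ _ _ r]
  have h := HopfAlgebra.sum_antipode_mul_eq_algebraMap_counit (R := F) (RBreprMap φ hΔ a r)
  have hε' := LinearMap.congr_fun hε a
  simp only [LinearMap.comp_apply] at hε' h
  simpa [RBreprMap, RBe_apply, hε'] using h

lemma circ_repr (B₁ B₂ : H →ₗ[F] H) (a b : H) (r : Coalgebra.Repr F a (H × H)) :
    circ B₁ B₂ a b =
      ∑ i ∈ r.index, B₁ (r.left i) * b * antipode (R := F) (B₂ (r.right i)) := by
  simp only [circ, circL, LinearMap.comp_apply, TensorProduct.map_tmul, LinearMap.id_coe, id_eq]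
  rw [← r.eq]
  simp only [TensorProduct.sum_tmul, map_sum, LinearEquiv.coe_coe, TensorProduct.assoc_tmul,
    TensorProduct.map_tmul, LinearMap.id_coe, id_eq, TensorProduct.comm_tmul,
    TensorProduct.assoc_symm_tmul, LinearMap.comp_apply, LinearMap.mul'_apply]

lemma TL_eq_conv (B₁ B₂ : H →ₗ[F] H) :
    TL B₁ B₂ = RBconv ((antipode (R := F)) ∘ₗ B₁) B₂ := rfl

lemma cocycleL_eq_conv (B₁ B₂ : H →ₗ[F] H) :
    cocycleL B₁ B₂ = RBconv B₁ ((antipode (R := F)) ∘ₗ B₂) := rfl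

lemma RBkey (hcc : ∀ a : H, (TensorProduct.comm F H H) (Coalgebra.comul a) = Coalgebra.comul a)
    (B₁ B₂ : H →ₗ[F] H) (a : H) (r : Coalgebra.Repr F a (H × H)) :
    ∑ i ∈ r.index, circ B₁ B₂ (r.left i) (TL B₁ B₂ (r.right i))
      = RBconv B₁ (RBconv (TL B₁ B₂) ((antipode (R := F)) ∘ₗ B₂)) a := by
  set rl : ∀ i : r.ι, Coalgebra.Repr F (r.left i) (H × H) := fun i => Coalgebra.Repr.arbitrary F _
  set rr : ∀ i : r.ι, Coalgebra.Repr F (r.right i) (H × H) := fun i => Coalgebra.Repr.arbitrary F _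
  -- step 1: coassociativity
  have h1 := Coalgebra.sum_tmul_tmul_eq (R := F) r rl rr
  -- step 2: swap the last two factors
  have h2 := congrArg (LinearMap.lTensor H (TensorProduct.comm F H H).toLinearMap) h1
  simp only [map_sum, LinearMap.lTensor_tmul, LinearEquiv.coe_coe,
    TensorProduct.comm_tmul] at h2
  -- step 3: use cocommutativity on the inner comultiplications
  have h3 : ∀ i ∈ r.index,
      ∑ j ∈ (rr i).index, r.left i ⊗ₜ[F] ((rr i).right j ⊗ₜ[F] (rr i).left j)
        = ∑ j ∈ (rr i).index, r.left i ⊗ₜ[F] ((rr i).left j ⊗ₜ[F] (rr i).right j) := by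
    intro i _
    rw [← TensorProduct.tmul_sum, ← TensorProduct.tmul_sum]
    congr 1
    have : ∑ j ∈ (rr i).index, ((rr i).right j ⊗ₜ[F] (rr i).left j)
        = (TensorProduct.comm F H H) (∑ j ∈ (rr i).index,
            ((rr i).left j ⊗ₜ[F] (rr i).right j)) := by
      simp [map_sum]
    rw [this, (rr i).eq, hcc (r.right i), ← (rr i).eq]
  rw [Finset.sum_congr rfl h3] at h2
  -- step 4: apply the trilinear multiplication map
  set tri : H ⊗[F] (H ⊗[F] H) →ₗ[F] H :=
    (LinearMap.mul' F H) ∘ₗ (LinearMap.lTensor H (LinearMap.mul' F H))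
      ∘ₗ (TensorProduct.map B₁ (TensorProduct.map (TL B₁ B₂) ((antipode (R := F)) ∘ₗ B₂)))
    with htri
  have h4 := congrArg tri h2
  simp only [map_sum, htri, LinearMap.comp_apply, TensorProduct.map_tmul,
    LinearMap.lTensor_tmul, LinearMap.mul'_apply] at h4
  calc ∑ i ∈ r.index, circ B₁ B₂ (r.left i) (TL B₁ B₂ (r.right i))
      = ∑ i ∈ r.index, ∑ j ∈ (rl i).index,
          B₁ ((rl i).left j) * (TL B₁ B₂ (r.right i)
            * antipode (R := F) (B₂ ((rl i).right j))) := by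
        refine Finset.sum_congr rfl fun i _ => ?_
        rw [circ_repr _ _ _ _ (rl i)]
        exact Finset.sum_congr rfl fun j _ => (mul_assoc _ _ _)
    _ = ∑ i ∈ r.index, ∑ j ∈ (rr i).index,
          B₁ (r.left i) * (TL B₁ B₂ ((rr i).left j)
            * antipode (R := F) (B₂ ((rr i).right j))) := h4
    _ = RBconv B₁ (RBconv (TL B₁ B₂) ((antipode (R := F)) ∘ₗ B₂)) a := by
        rw [RBconv_repr _ _ _ r]
        refine Finset.sum_congr rfl fun i _ => ?_
        rw [RBconv_repr _ _ _ (rr i), Finset.mul_sum]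
        exact Finset.sum_congr rfl fun j _ => rfl

lemma RBT (hcc : ∀ a : H, (TensorProduct.comm F H H) (Coalgebra.comul a) = Coalgebra.comul a)
    (B₁ B₂ : H →ₗ[F] H) (hRB : IsRBSystem B₁ B₂) (φ : H →ₗ[F] H)
    (hΔ : Coalgebra.comul ∘ₗ φ = TensorProduct.map φ φ ∘ₗ Coalgebra.comul)
    (hε : Coalgebra.counit ∘ₗ φ = Coalgebra.counit (R := F))
    (hφ1 : φ 1 = 1)
    (hmul : ∀ a b : H, φ a * φ b = φ (circ B₁ B₂ a b)) :
    φ ∘ₗ TL B₁ B₂ = (antipode (R := F)) ∘ₗ φ := by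
  obtain ⟨h1, h2, h3, h4, h5, h6, h7, h8⟩ := hRB
  have hQ : RBconv (TL B₁ B₂) ((antipode (R := F)) ∘ₗ B₂) = (antipode (R := F)) ∘ₗ B₁ := by
    rw [TL_eq_conv, RBconv_assoc, RBconv_antipode_right B₂ h3 h4, RBconv_one_right]
  have hKe : RBconv B₁ (RBconv (TL B₁ B₂) ((antipode (R := F)) ∘ₗ B₂)) = RBe (F := F) := by
    rw [hQ, RBconv_antipode_right B₁ h1 h2]
  have hA : RBconv φ (φ ∘ₗ TL B₁ B₂) = RBe (F := F) := by
    ext a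
    obtain r := Coalgebra.Repr.arbitrary F a
    rw [RBconv_repr _ _ _ r]
    calc ∑ i ∈ r.index, φ (r.left i) * (φ ∘ₗ TL B₁ B₂) (r.right i)
        = ∑ i ∈ r.index, φ (circ B₁ B₂ (r.left i) (TL B₁ B₂ (r.right i))) := by
          exact Finset.sum_congr rfl fun i _ => hmul _ _
      _ = φ (∑ i ∈ r.index, circ B₁ B₂ (r.left i) (TL B₁ B₂ (r.right i))) :=
          (map_sum φ _ _).symm
      _ = φ (RBconv B₁ (RBconv (TL B₁ B₂) ((antipode (R := F)) ∘ₗ B₂)) a) := by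
          rw [RBkey hcc B₁ B₂ a r]
      _ = φ (RBe (F := F) a) := by rw [hKe]
      _ = RBe (F := F) a := by
          rw [RBe_apply, Algebra.algebraMap_eq_smul_one, map_smul, hφ1]
  calc φ ∘ₗ TL B₁ B₂ = RBconv (RBe (F := F)) (φ ∘ₗ TL B₁ B₂) := (RBconv_one_left _).symm
    _ = RBconv (RBconv ((antipode (R := F)) ∘ₗ φ) φ) (φ ∘ₗ TL B₁ B₂) := by
        rw [RBconv_antipode_left φ hΔ hε]
    _ = RBconv ((antipode (R := F)) ∘ₗ φ) (RBconv φ (φ ∘ₗ TL B₁ B₂)) := RBconv_assoc _ _ _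
    _ = RBconv ((antipode (R := F)) ∘ₗ φ) (RBe (F := F)) := by rw [hA]
    _ = (antipode (R := F)) ∘ₗ φ := RBconv_one_right _

/-- `B₁` and `B₂` are Hopf algebra homomorphisms from the descendent Hopf algebra
`H_{B₁,B₂} = (Im σ, ∘, 1, Δ, ε, T)` to `H`, and `Im(B₁)`, `Im(B₂)` are Hopf
subalgebras of `H`. -/
theorem B_hopfHom_and_image_hopfSubalgebra
    (hcc : ∀ a : H, (TensorProduct.comm F H H) (Coalgebra.comul a) = Coalgebra.comul a)
    (B₁ B₂ : H →ₗ[F] H) (hRB : IsRBSystem B₁ B₂) :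
    -- B₁ and B₂ are multiplicative from (Im σ, ∘) to (H, ·) and intertwine the antipodes
    (∀ a b : H, B₁ (circ B₁ B₂ (cocycleL B₁ B₂ a) (cocycleL B₁ B₂ b)) =
      B₁ (cocycleL B₁ B₂ a) * B₁ (cocycleL B₁ B₂ b)) ∧
    (∀ a : H, B₁ (TL B₁ B₂ (cocycleL B₁ B₂ a)) = antipode (R := F) (B₁ (cocycleL B₁ B₂ a))) ∧
    (∀ a b : H, B₂ (circ B₁ B₂ (cocycleL B₁ B₂ a) (cocycleL B₁ B₂ b)) =
      B₂ (cocycleL B₁ B₂ a) * B₂ (cocycleL B₁ B₂ b)) ∧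
    (∀ a : H, B₂ (TL B₁ B₂ (cocycleL B₁ B₂ a)) = antipode (R := F) (B₂ (cocycleL B₁ B₂ a))) ∧
    -- Im(B₁) is a Hopf subalgebra of H
    ((1 : H) ∈ LinearMap.range B₁ ∧
     (∀ x ∈ LinearMap.range B₁, ∀ y ∈ LinearMap.range B₁, x * y ∈ LinearMap.range B₁) ∧
     (∀ x ∈ LinearMap.range B₁,
        Coalgebra.comul x ∈ LinearMap.range (TensorProduct.map B₁ B₁)) ∧
     (∀ x ∈ LinearMap.range B₁, antipode (R := F) x ∈ LinearMap.range B₁)) ∧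
    -- Im(B₂) is a Hopf subalgebra of H
    ((1 : H) ∈ LinearMap.range B₂ ∧
     (∀ x ∈ LinearMap.range B₂, ∀ y ∈ LinearMap.range B₂, x * y ∈ LinearMap.range B₂) ∧
     (∀ x ∈ LinearMap.range B₂,
        Coalgebra.comul x ∈ LinearMap.range (TensorProduct.map B₂ B₂)) ∧
     (∀ x ∈ LinearMap.range B₂, antipode (R := F) x ∈ LinearMap.range B₂)) := by
  obtain ⟨h1, h2, h3, h4, h5, h6, h7, h8⟩ := hRB
  have hRB' : IsRBSystem B₁ B₂ := ⟨h1, h2, h3, h4, h5, h6, h7, h8⟩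
  have hT1 := RBT hcc B₁ B₂ hRB' B₁ h1 h2 h5 h7
  have hT2 := RBT hcc B₁ B₂ hRB' B₂ h3 h4 h6 h8
  refine ⟨fun a b => (h7 _ _).symm, fun a => ?_, fun a b => (h8 _ _).symm, fun a => ?_,
    ⟨⟨1, h5⟩, ?_, ?_, ?_⟩, ⟨⟨1, h6⟩, ?_, ?_, ?_⟩⟩
  · exact LinearMap.congr_fun hT1 (cocycleL B₁ B₂ a)
  · exact LinearMap.congr_fun hT2 (cocycleL B₁ B₂ a)
  · rintro x ⟨u, rfl⟩ y ⟨v, rfl⟩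
    exact ⟨circ B₁ B₂ u v, (h7 u v).symm⟩
  · rintro x ⟨u, rfl⟩
    exact ⟨Coalgebra.comul u, (LinearMap.congr_fun h1 u).symm⟩
  · rintro x ⟨u, rfl⟩
    exact ⟨TL B₁ B₂ u, LinearMap.congr_fun hT1 u⟩
  · rintro x ⟨u, rfl⟩ y ⟨v, rfl⟩
    exact ⟨circ B₁ B₂ u v, (h8 u v).symm⟩
  · rintro x ⟨u, rfl⟩
    exact ⟨Coalgebra.comul u, (LinearMap.congr_fun h3 u).symm⟩
  · rintro x ⟨u, rfl⟩
    exact ⟨TL B₁ B₂ u, LinearMap.congr_fun hT2 u⟩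
end
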